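/- arXiv:1010.5614 — 2 statements merged into one kernel-verified Lean document; each statement's English description precedes it below -/
import Mathlib

section
/- For all natural numbers p, q and N with N ≥ p, the binomial identity Σ_{i=1}^{N−p} C(N−i, p) · C(N+q−i, q) = C(N+q, p+q+1) · C(p+q, q) holds, where C(a,b) denotes the binomial coefficient. (This computes the number of semistandard Young tableaux of hook shape (q+1, 1^p) with entries in {1,…,N}.) -/
/-- The binomial identity counting semistandard Young tableaux of hook shape
`(q+1, 1^p)` with entries in `{1, …, N}`:
`Σ_{i=1}^{N-p} C(N-i,p)·C(N+q-i,q) = C(N+q, p+q+1)·C(p+q, q)`. -/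
theorem statement2 (p q N : ℕ) (hN : p ≤ N) :
    ∑ i ∈ Finset.Icc 1 (N - p), (N - i).choose p * (N + q - i).choose q =
      (N + q).choose (p + q + 1) * (p + q).choose q := by
  obtain _ | n := N
  · obtain rfl : p = 0 := Nat.le_zero.mp hN
    simp [Nat.choose_eq_zero_of_lt]
  · have h1 : ∑ i ∈ Finset.Icc 1 (n + 1 - p), (n + 1 - i).choose p * (n + 1 + q - i).choose q
        = ∑ j ∈ Finset.Icc p n, (j + q).choose (p + q) * (p + q).choose q := by
      refine Finset.sum_nbij' (fun i => n + 1 - i) (fun j => n + 1 - j) ?_ ?_ ?_ ?_ ?_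
      · intro a ha; simp only [Finset.mem_Icc] at *; omega
      · intro a ha; simp only [Finset.mem_Icc] at *; omega
      · intro a ha; simp only [Finset.mem_Icc] at ha; show n + 1 - (n + 1 - a) = a; omega
      · intro a ha; simp only [Finset.mem_Icc] at ha; show n + 1 - (n + 1 - a) = a; omega
      · intro a ha
        simp only [Finset.mem_Icc] at ha
        have h2 : n + 1 + q - a = (n + 1 - a) + q := by omega
        have h3 : p ≤ n + 1 - a := by omega
        rw [h2, Nat.choose_mul (by omega : q ≤ p + q),
          Nat.add_sub_cancel, Nat.add_sub_cancel, mul_comm]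
    rw [h1, ← Finset.sum_mul]
    congr 1
    have h4 : ∑ j ∈ Finset.Icc p n, (j + q).choose (p + q)
        = ∑ k ∈ Finset.Icc (p + q) (n + q), k.choose (p + q) := by
      rw [← Finset.map_add_right_Icc, Finset.sum_map]
      rfl
    rw [h4, Nat.sum_Icc_choose]
    congr 1
    omega
end

section
/- For all g ≥ 0, n ≥ 0, and m ≥ 0, the following recursion holds in ℤ: (m+1)·c_g(n+1, m+1) = (m+1)·c_g(n, m+1) + (2n+1−m)·c_g(n, m). -/
open Equiv Equiv.Perm Finset

/-- old-to-new index map when inserting a chord at gap `p`. -/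
def fup (p x : ℕ) : ℕ := if x < p then x else x + 2

lemma fup_lt {N p x : ℕ} (hx : x < N) : fup p x < N + 2 := by unfold fup; split <;> omega

lemma fup_inj {p : ℕ} : Function.Injective (fup p) := by
  intro a b h; unfold fup at h; split at h <;> split at h <;> omega

lemma fup_ne_p {p x : ℕ} : fup p x ≠ p := by unfold fup; split <;> omega
lemma fup_ne_p1 {p x : ℕ} : fup p x ≠ p + 1 := by unfold fup; split <;> omega

/-- down map -/
def gdn (p z : ℕ) : ℕ := if z < p then z else z - 2

lemma gdn_lt {N p z : ℕ} (hz : z < N + 2) (hp : p ≤ N) (h1 : z ≠ p) (h2 : z ≠ p + 1) :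
    gdn p z < N := by unfold gdn; split <;> omega

lemma fup_gdn {p z : ℕ} (h1 : z ≠ p) (h2 : z ≠ p + 1) (h3 : 2 ≤ p → True) :
    fup p (gdn p z) = z := by unfold fup gdn; split_ifs <;> omega

lemma gdn_fup {p x : ℕ} : gdn p (fup p x) = x := by unfold fup gdn; split_ifs <;> omega

/-- the equivalence between `Fin N` and the complement of `{p, p+1}` in `Fin (N+2)`. -/
def eqvF (N p : ℕ) (hp : p ≤ N) :
    Fin N ≃ {z : Fin (N + 2) // (z : ℕ) ≠ p ∧ (z : ℕ) ≠ p + 1} where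
  toFun x := ⟨⟨fup p x, fup_lt x.2⟩, fup_ne_p, fup_ne_p1⟩
  invFun z := ⟨gdn p z.1, gdn_lt z.1.2 hp z.2.1 z.2.2⟩
  left_inv x := by ext; exact gdn_fup
  right_inv z := by
    ext
    exact fup_gdn z.2.1 z.2.2 (fun _ => trivial)

lemma eqvF_val {N p : ℕ} (hp : p ≤ N) (x : Fin N) :
    ((eqvF N p hp x : Fin (N + 2)) : ℕ) = fup p x := rfl

/-- Insertion of a 1-chord at gap `p` into the chord diagram `ι`. -/
def insPerm (N p : ℕ) (hp : p ≤ N) (ι : Perm (Fin N)) : Perm (Fin (N + 2)) :=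
  swap ⟨p, by omega⟩ ⟨p + 1, by omega⟩ * ι.extendDomain (eqvF N p hp)

lemma insPerm_apply_p {N p : ℕ} (hp : p ≤ N) (ι : Perm (Fin N)) :
    insPerm N p hp ι ⟨p, by omega⟩ = ⟨p + 1, by omega⟩ := by
  unfold insPerm
  rw [Perm.mul_apply, extendDomain_apply_not_subtype, swap_apply_left]
  simp

lemma insPerm_apply_p1 {N p : ℕ} (hp : p ≤ N) (ι : Perm (Fin N)) :
    insPerm N p hp ι ⟨p + 1, by omega⟩ = ⟨p, by omega⟩ := by
  unfold insPerm
  rw [Perm.mul_apply, extendDomain_apply_not_subtype, swap_apply_right]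
  simp

lemma insPerm_apply_fup {N p : ℕ} (hp : p ≤ N) (ι : Perm (Fin N)) (x : Fin N) :
    insPerm N p hp ι ⟨fup p x, fup_lt x.2⟩ = ⟨fup p (ι x), fup_lt (ι x).2⟩ := by
  unfold insPerm
  rw [Perm.mul_apply]
  have : (⟨fup p x, fup_lt x.2⟩ : Fin (N+2)) = ((eqvF N p hp x : Fin (N+2))) := rfl
  rw [this, extendDomain_apply_image]
  rw [swap_apply_of_ne_of_ne]
  · rfl
  · exact fun h => fup_ne_p (congrArg Fin.val h)
  · exact fun h => fup_ne_p1 (congrArg Fin.val h)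

lemma cover {N p : ℕ} (hp : p ≤ N) (z : Fin (N + 2)) :
    z = ⟨p, by omega⟩ ∨ z = ⟨p + 1, by omega⟩ ∨ ∃ x : Fin N, z = ⟨fup p x, fup_lt x.2⟩ := by
  rcases z with ⟨z, hz⟩
  by_cases h1 : z = p
  · left; simp [h1]
  by_cases h2 : z = p + 1
  · right; left; simp [h2]
  right; right
  refine ⟨⟨gdn p z, gdn_lt hz hp h1 h2⟩, ?_⟩
  ext
  exact (fup_gdn h1 h2 (fun _ => trivial)).symm

/-- Number of cycles (including fixed points as 1-cycles) of a permutation of `Fin m`. -/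
def numCycles {m : ℕ} (σ : Equiv.Perm (Fin m)) : ℕ :=
  (m - σ.support.card) + σ.cycleType.card

section invol
variable {N p : ℕ} (hp : p ≤ N) (ι : Perm (Fin N))

lemma insPerm_sq (hinv : ι * ι = 1) : insPerm N p hp ι * insPerm N p hp ι = 1 := by
  ext z
  rcases cover hp z with rfl | rfl | ⟨x, rfl⟩ <;>
    simp only [Perm.mul_apply, Perm.one_apply, insPerm_apply_p, insPerm_apply_p1,
      insPerm_apply_fup]
  have : ι (ι x) = x := by
    have := congrArg (fun σ : Perm (Fin N) => σ x) hinv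
    simpa [Perm.mul_apply] using this
  rw [this]

lemma insPerm_fpf (hfpf : ∀ i, ι i ≠ i) : ∀ z, insPerm N p hp ι z ≠ z := by
  intro z
  rcases cover hp z with rfl | rfl | ⟨x, rfl⟩
  · rw [insPerm_apply_p]
    intro h; have := congrArg Fin.val h; simp at this
  · rw [insPerm_apply_p1]
    intro h; have := congrArg Fin.val h; simp at this
  · rw [insPerm_apply_fup]
    intro h; have := congrArg Fin.val h; simp only at this
    exact hfpf x (Fin.ext (fup_inj this))

end invol

/-- Inserting a fixed point `b` into the cycle `c` right after `a`. -/
lemma cycle_insert {α : Type*} [Fintype α] [DecidableEq α] {c : Perm α} (hc : IsCycle c)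
    {a b : α} (ha : c a ≠ a) (hb : c b = b) :
    IsCycle (c * swap a b) ∧ (c * swap a b).support = insert b c.support := by
  have hab : a ≠ b := by rintro rfl; exact ha hb
  have hcab : c a ≠ b := by
    intro h
    exact hab (c.injective (h.trans hb.symm))
  have hcab' : c a ≠ b := hcab
  set f := c * swap a b with hf
  have hfb : f b = c a := by simp [hf, Perm.mul_apply, swap_apply_right]
  have hfa : f a = b := by simp [hf, Perm.mul_apply, swap_apply_left, hb]
  have hfx : ∀ x, x ≠ a → x ≠ b → f x = c x := by
    intro x h1 h2; simp [hf, Perm.mul_apply, swap_apply_of_ne_of_ne h1 h2]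
  have hsupp : f.support = insert b c.support := by
    ext x
    simp only [mem_support, mem_insert]
    by_cases h1 : x = a
    · subst h1
      constructor
      · intro _; exact Or.inr ha
      · intro _; rw [hfa]; exact hab.symm
    by_cases h2 : x = b
    · subst h2
      constructor
      · intro _; exact Or.inl rfl
      · intro _; rw [hfb]; exact fun h => hcab h
    · rw [hfx x h1 h2]; simp [h2]
  constructor
  · refine ⟨b, by rw [hfb]; exact fun h => hcab h, ?_⟩
    have S1 : ∀ x, c x ≠ x → x ≠ a → SameCycle f x (c x) := by
      intro x hx hxa
      have hxb : x ≠ b := fun h => hx (h ▸ hb)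
      exact ⟨1, by simp [hfx x hxa hxb]⟩
    have S2 : SameCycle f b (c a) := ⟨1, by simp [hfb]⟩
    have S3 : ∀ i : ℕ, SameCycle f b ((c ^ i) (c a)) := by
      intro i
      induction i with
      | zero => simpa using S2
      | succ i ih =>
        have hy : (c ^ (i+1)) (c a) = c ((c ^ i) (c a)) := by
          rw [pow_succ']
          simp [Perm.mul_apply]
        rw [hy]
        set y := (c ^ i) (c a) with hy'
        by_cases hya : y = a
        · rw [hya]; exact S2
        · have hymem : y ∈ c.support := by
            rw [hy']
            apply Equiv.Perm.pow_apply_mem_support.2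
            simpa using fun h => ha (c.injective h)
          exact ih.trans (S1 y (mem_support.1 hymem) hya)
    intro y hy
    have : y ∈ f.support := mem_support.2 hy
    rw [hsupp, mem_insert] at this
    rcases this with rfl | hmem
    · exact SameCycle.refl _ _
    · have hcy : c y ≠ y := mem_support.1 hmem
      have hcca : c (c a) ≠ c a := fun h => ha (c.injective h)
      obtain ⟨i, hi⟩ := hc.exists_pow_eq hcca hcy
      exact hi ▸ S3 i
  · exact hsupp

/-- multiplying by a transposition with a fixed point decreases the cycle count by one. -/
lemma numCycles_mul_swap {K : ℕ} (π : Perm (Fin K)) (a p : Fin K)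
    (hp : π p = p) (hap : a ≠ p) : numCycles (π * swap a p) + 1 = numCycles π := by
  by_cases hA : π a = a
  · have hd : π.Disjoint (swap a p) := by
      intro x
      by_cases h1 : x = a
      · left; rw [h1, hA]
      by_cases h2 : x = p
      · left; rw [h2, hp]
      · right; exact swap_apply_of_ne_of_ne h1 h2
    have hct : (π * swap a p).cycleType = π.cycleType + (swap a p).cycleType := hd.cycleType_mul
    have hsw : (swap a p).cycleType = {2} := by
      rw [(isCycle_swap hap).cycleType, card_support_swap hap]
    have hsc : (π * swap a p).support.card = π.support.card + 2 := by
      rw [hd.card_support_mul, card_support_swap hap]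
    have hle : (π * swap a p).support.card ≤ K := by
      simpa using Finset.card_le_univ (π * swap a p).support
    unfold numCycles
    rw [hct, hsw, hsc]
    simp only [Multiset.card_add, Multiset.card_singleton]
    omega
  · set c := π.cycleOf a with hc
    have hcyc : IsCycle c := isCycle_cycleOf π hA
    have hmem : c ∈ π.cycleFactorsFinset := cycleOf_mem_cycleFactorsFinset_iff.2 (mem_support.2 hA)
    have hd : (π * c⁻¹).Disjoint c := disjoint_mul_inv_of_mem_cycleFactorsFinset hmem
    set ρ := π * c⁻¹ with hρ
    have hπ : π = ρ * c := by rw [hρ, inv_mul_cancel_right]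
    have hca : c a = π a := cycleOf_apply_self π a
    have hρa : ρ a = a := by
      rcases hd a with h | h
      · exact h
      · rw [hca] at h; exact absurd h hA
    have hcp : c p = p := by
      have : p ∉ c.support := by
        intro hmem'
        exact absurd hp (mem_support.1 (mem_cycleFactorsFinset_support_le hmem hmem'))
      exact notMem_support.1 this
    have hρp : ρ p = p := by
      have hinv : c⁻¹ p = p := by
        rw [Equiv.Perm.inv_eq_iff_eq]; exact hcp.symm
      rw [hρ]; rw [Perm.mul_apply, hinv, hp]
    have hcane : c a ≠ a := by rw [hca]; exact hA
    obtain ⟨hcyc', hsupp'⟩ := cycle_insert hcyc hcane hcp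
    have hkey : π * swap a p = ρ * (c * swap a p) := by rw [hπ, mul_assoc]
    have hd' : ρ.Disjoint (c * swap a p) := by
      intro x
      by_cases h1 : x = a
      · left; rw [h1, hρa]
      by_cases h2 : x = p
      · left; rw [h2, hρp]
      rcases hd x with h | h
      · left; exact h
      · right; rw [Perm.mul_apply, swap_apply_of_ne_of_ne h1 h2, h]
    have hpnotc : p ∉ c.support := notMem_support.2 hcp
    have hsc' : (c * swap a p).support.card = c.support.card + 1 := by
      rw [hsupp', Finset.card_insert_of_notMem hpnotc]
    have hct1 : (π * swap a p).cycleType = ρ.cycleType + {c.support.card + 1} := by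
      rw [hkey, hd'.cycleType_mul, hcyc'.cycleType, hsc']
    have hct2 : π.cycleType = ρ.cycleType + {c.support.card} := by
      rw [hπ, hd.cycleType_mul, hcyc.cycleType]
    have hsc1 : (π * swap a p).support.card = ρ.support.card + (c.support.card + 1) := by
      rw [hkey, hd'.card_support_mul, hsc']
    have hsc2 : π.support.card = ρ.support.card + c.support.card := by
      rw [hπ, hd.card_support_mul]
    have hle : (π * swap a p).support.card ≤ K := by
      simpa using Finset.card_le_univ (π * swap a p).support
    unfold numCycles
    rw [hct1, hct2, hsc1, hsc2]
    simp only [Multiset.card_add, Multiset.card_singleton]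
    omega

lemma mod_cases {a b : ℕ} (hb : 0 < b) (h2 : a < 2 * b) :
    a % b = if a < b then a else a - b := by
  split
  · exact Nat.mod_eq_of_lt ‹_›
  · rw [Nat.mod_eq_sub_mod (by omega)]
    exact Nat.mod_eq_of_lt (by omega)

lemma rot_val {K : ℕ} (hK : 0 < K) (i : Fin K) :
    ((finRotate K) i : ℕ) = ((i : ℕ) + 1) % K := by
  obtain ⟨M, rfl⟩ : ∃ M, K = M + 1 := ⟨K - 1, by omega⟩
  rw [finRotate_succ_apply, Fin.add_def]
  rw [Fin.val_one']
  conv_rhs => rw [Nat.add_mod]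
  rw [Nat.mod_eq_of_lt i.2]

/-- the point after which the new fixed point of `τ ∘ ι` gets spliced in -/
def qf (N p : ℕ) (hN : 0 < N) (hp : p ≤ N) : Fin N :=
  ⟨if p = 0 then N - 1 else p - 1, by split <;> omega⟩

lemma ins_decomp {N p : ℕ} (hp : p ≤ N) (ι : Perm (Fin N)) (hN : 0 < N) (hinv : ι * ι = 1) :
    finRotate (N + 2) * insPerm N p hp ι =
      (finRotate N * ι).extendDomain (eqvF N p hp) *
        swap ⟨fup p (ι (qf N p hN hp)), fup_lt (ι (qf N p hN hp)).2⟩ ⟨p, by omega⟩ := by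
  have hii : ∀ x, ι (ι x) = x := by
    intro x
    have := congrArg (fun σ : Perm (Fin N) => σ x) hinv
    simpa [Perm.mul_apply] using this
  have rotval : ∀ w : Fin (N+2), ((finRotate (N+2)) w : ℕ) = ((w : ℕ) + 1) % (N+2) :=
    rot_val (by omega)
  have rotvalN : ∀ w : Fin N, ((finRotate N) w : ℕ) = ((w : ℕ) + 1) % N := rot_val hN
  set σ : Perm (Fin N) := finRotate N * ι with hσ
  have hσval : ∀ x : Fin N, ((σ x : ℕ)) = ((ι x : ℕ) + 1) % N := by
    intro x; rw [hσ, Perm.mul_apply, rotvalN]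
  have extnot : ∀ w : Fin (N+2), (w : ℕ) = p ∨ (w : ℕ) = p + 1 →
      σ.extendDomain (eqvF N p hp) w = w := by
    intro w hw
    apply extendDomain_apply_not_subtype
    rintro ⟨h1, h2⟩
    rcases hw with h | h <;> tauto
  have extim : ∀ x : Fin N, σ.extendDomain (eqvF N p hp) ⟨fup p x, fup_lt x.2⟩ =
      ⟨fup p (σ x), fup_lt (σ x).2⟩ := by
    intro x
    have h1 : (⟨fup p x, fup_lt x.2⟩ : Fin (N+2)) = ((eqvF N p hp x : Fin (N+2))) := rfl
    rw [h1, extendDomain_apply_image]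
    rfl
  have hqval : ((qf N p hN hp : ℕ)) = if p = 0 then N - 1 else p - 1 := rfl
  ext z
  rcases cover hp z with rfl | rfl | ⟨x, rfl⟩
  · -- z = p
    rw [Perm.mul_apply, Perm.mul_apply, insPerm_apply_p, swap_apply_right, extim]
    rw [rotval]
    show ((p + 1) + 1) % (N + 2) = fup p ((σ (ι (qf N p hN hp)) : ℕ))
    rw [hσval, hii]
    rw [hqval, mod_cases hN (by split <;> omega), mod_cases (show 0 < N + 2 by omega) (by omega)]
    simp only [fup]
    split_ifs <;> omega
  · -- z = p + 1
    rw [Perm.mul_apply, Perm.mul_apply, insPerm_apply_p1]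
    rw [swap_apply_of_ne_of_ne ?h1 ?h2]
    case h1 =>
      intro h
      exact fup_ne_p1 (congrArg Fin.val h).symm
    case h2 =>
      intro h
      have := congrArg Fin.val h; simp only [Fin.val_mk] at this; omega
    rw [extnot _ (Or.inr rfl)]
    rw [rotval]
    show ((p : ℕ) + 1) % (N + 2) = p + 1
    exact Nat.mod_eq_of_lt (by omega)
  · -- z = fup x
    rw [Perm.mul_apply, Perm.mul_apply, insPerm_apply_fup]
    by_cases hx : x = ι (qf N p hN hp)
    · have hz : (⟨fup p x, fup_lt x.2⟩ : Fin (N+2)) =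
          ⟨fup p (ι (qf N p hN hp)), fup_lt (ι (qf N p hN hp)).2⟩ := by
        apply Fin.ext; show fup p (x : ℕ) = _; rw [hx]
      rw [hz, swap_apply_left, extnot _ (Or.inl rfl)]
      rw [rotval]
      show (fup p ((ι x : ℕ)) + 1) % (N + 2) = (p : ℕ)
      have : (ι x : ℕ) = (qf N p hN hp : ℕ) := by rw [hx, hii]
      rw [this, hqval]
      rw [mod_cases (show 0 < N + 2 by omega) (by simp only [fup]; split_ifs <;> omega)]
      simp only [fup]
      split_ifs <;> omega
    · have hne1 : (⟨fup p x, fup_lt x.2⟩ : Fin (N+2)) ≠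
          ⟨fup p (ι (qf N p hN hp)), fup_lt (ι (qf N p hN hp)).2⟩ := by
        intro h
        have := fup_inj (congrArg Fin.val h)
        exact hx (Fin.ext this)
      have hne2 : (⟨fup p x, fup_lt x.2⟩ : Fin (N+2)) ≠ ⟨p, by omega⟩ := by
        intro h; exact fup_ne_p (congrArg Fin.val h)
      rw [swap_apply_of_ne_of_ne hne1 hne2, extim]
      rw [rotval]
      have hyq : (ι x : ℕ) ≠ (qf N p hN hp : ℕ) := by
        intro h
        exact hx (by rw [← hii x, Fin.ext h])
      show (fup p ((ι x : ℕ)) + 1) % (N + 2) = fup p ((σ x : ℕ))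
      rw [hσval]
      have hιx : (ι x : ℕ) < N := (ι x).2
      rw [hqval] at hyq
      rw [mod_cases hN (by omega),
        mod_cases (show 0 < N + 2 by omega) (by simp only [fup]; split_ifs <;> omega)]
      by_cases hp0 : p = 0
      · rw [if_pos hp0] at hyq
        simp only [fup]; split_ifs <;> omega
      · rw [if_neg hp0] at hyq
        simp only [fup]; split_ifs <;> omega

lemma numCycles_extendDomain {N p : ℕ} (hp : p ≤ N) (σ : Perm (Fin N)) :
    numCycles (σ.extendDomain (eqvF N p hp)) = numCycles σ + 2 := by
  unfold numCycles
  rw [card_support_extend_domain, cycleType_extendDomain]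
  have : σ.support.card ≤ N := by simpa using Finset.card_le_univ σ.support
  omega

lemma numCycles_ins {N p : ℕ} (hp : p ≤ N) (ι : Perm (Fin N)) (hN : 0 < N) (hinv : ι * ι = 1) :
    numCycles (finRotate (N + 2) * insPerm N p hp ι) + 1 =
      numCycles (finRotate N * ι) + 2 := by
  rw [ins_decomp hp ι hN hinv]
  rw [numCycles_mul_swap _ _ _ ?hfix ?hne]
  case hfix =>
    apply extendDomain_apply_not_subtype
    rintro ⟨h1, _⟩; exact h1 rfl
  case hne => intro h; exact fup_ne_p (congrArg Fin.val h)
  exact numCycles_extendDomain hp _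

section del
variable {N p : ℕ} (hp : p ≤ N)

/-- predicate preservation needed for deletion -/
lemma pres_of {ι' : Perm (Fin (N + 2))} (hii' : ∀ z, ι' (ι' z) = z)
    (hch : ι' ⟨p, by omega⟩ = ⟨p + 1, by omega⟩) :
    ∀ z : Fin (N + 2), ((z : ℕ) ≠ p ∧ (z : ℕ) ≠ p + 1) ↔
      ((ι' z : ℕ) ≠ p ∧ (ι' z : ℕ) ≠ p + 1) := by
  have hch' : ι' ⟨p + 1, by omega⟩ = ⟨p, by omega⟩ := by
    rw [← hch, hii']
  intro z
  constructor
  · rintro ⟨h1, h2⟩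
    constructor
    · intro h
      have hz : ι' z = ⟨p, by omega⟩ := Fin.ext h
      have : z = (⟨p + 1, by omega⟩ : Fin (N + 2)) := by
        calc z = ι' (ι' z) := (hii' z).symm
        _ = ι' ⟨p, by omega⟩ := congrArg ι' hz
        _ = ⟨p + 1, by omega⟩ := hch
      exact h2 (congrArg Fin.val this)
    · intro h
      have hz : ι' z = ⟨p + 1, by omega⟩ := Fin.ext h
      have : z = (⟨p, by omega⟩ : Fin (N + 2)) := by
        calc z = ι' (ι' z) := (hii' z).symm
        _ = ι' ⟨p + 1, by omega⟩ := congrArg ι' hz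
        _ = ⟨p, by omega⟩ := hch'
      exact h1 (congrArg Fin.val this)
  · rintro ⟨h1, h2⟩
    constructor
    · intro h
      have : z = ⟨p, by omega⟩ := Fin.ext h
      rw [this, hch] at h2
      exact h2 rfl
    · intro h
      have : z = ⟨p + 1, by omega⟩ := Fin.ext h
      rw [this, hch'] at h1
      exact h1 rfl

/-- Deletion of the 1-chord occupying positions `p, p+1`. -/
def delPerm (ι' : Perm (Fin (N + 2)))
    (hpres : ∀ z : Fin (N + 2), ((z : ℕ) ≠ p ∧ (z : ℕ) ≠ p + 1) ↔
      ((ι' z : ℕ) ≠ p ∧ (ι' z : ℕ) ≠ p + 1)) : Perm (Fin N) :=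
  (eqvF N p hp).symm.permCongr (ι'.subtypePerm (fun z => (hpres z).symm))

lemma delPerm_apply (ι' : Perm (Fin (N + 2))) (hpres) (x : Fin N) :
    delPerm hp ι' hpres x = (eqvF N p hp).symm ⟨ι' (eqvF N p hp x),
      (hpres _).1 (eqvF N p hp x).2⟩ := by
  rfl

lemma ins_del (ι' : Perm (Fin (N + 2))) (hii' : ∀ z, ι' (ι' z) = z)
    (hch : ι' ⟨p, by omega⟩ = ⟨p + 1, by omega⟩) :
    insPerm N p hp (delPerm hp ι' (pres_of hp hii' hch)) = ι' := by
  have hch' : ι' ⟨p + 1, by omega⟩ = ⟨p, by omega⟩ := by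
    rw [← hch, hii']
  ext z
  rcases cover hp z with rfl | rfl | ⟨x, rfl⟩
  · rw [insPerm_apply_p, hch]
  · rw [insPerm_apply_p1, hch']
  · rw [insPerm_apply_fup]
    have h1 : (⟨fup p x, fup_lt x.2⟩ : Fin (N+2)) = ((eqvF N p hp x : Fin (N+2))) := rfl
    rw [h1]
    have h2 : ∀ y : Fin N, (⟨fup p y, fup_lt y.2⟩ : Fin (N+2)) = ((eqvF N p hp y : Fin (N+2))) :=
      fun y => rfl
    rw [h2]
    rw [delPerm_apply]
    rw [Equiv.apply_symm_apply]

lemma del_ins (ι : Perm (Fin N)) (hpres) :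
    delPerm hp (insPerm N p hp ι) hpres = ι := by
  apply Equiv.ext
  intro x
  rw [delPerm_apply, Equiv.symm_apply_eq]
  apply Subtype.ext
  show insPerm N p hp ι ((eqvF N p hp x : Fin (N+2))) = ((eqvF N p hp (ι x) : Fin (N+2)))
  have h1 : ((eqvF N p hp x : Fin (N+2))) = (⟨fup p x, fup_lt x.2⟩ : Fin (N+2)) := rfl
  rw [h1, insPerm_apply_fup]
  rfl

end del

/-- whether inserting at gap `p` splits an existing 1-chord -/
def SplitsAt {N : ℕ} (ι : Perm (Fin N)) (p : ℕ) : Prop :=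
  ∃ j : Fin N, ((ι j : ℕ) = (j : ℕ) + 1 ∧ (j : ℕ) + 1 = p)

instance {N : ℕ} (ι : Perm (Fin N)) (p : ℕ) : Decidable (SplitsAt ι p) := by
  unfold SplitsAt; infer_instance

/-- the number of 1-chords -/
def mct {K : ℕ} (σ : Perm (Fin K)) : ℕ :=
  (Finset.univ.filter fun i : Fin K => ((σ i : ℕ) = (i : ℕ) + 1)).card

lemma fup_chord {N p v j : ℕ} (hp : p ≤ N) (hv : v < N) (hj : j < N) :
    fup p v = fup p j + 1 ↔ (v = j + 1 ∧ j + 1 ≠ p) := by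
  unfold fup; split_ifs <;> omega

lemma mct_ins {N p : ℕ} (hp : p ≤ N) (ι : Perm (Fin N)) :
    mct (insPerm N p hp ι) + (if SplitsAt ι p then 1 else 0) = mct ι + 1 := by
  classical
  set big := Finset.univ.filter fun i : Fin (N+2) => ((insPerm N p hp ι i : ℕ) = (i : ℕ) + 1)
    with hbig
  set small := Finset.univ.filter fun j : Fin N => ((ι j : ℕ) = (j : ℕ) + 1) with hsmall
  have step1 : (Finset.filter (fun i : Fin (N+2) => (i : ℕ) = p) big) = {⟨p, by omega⟩} := by
    ext i
    simp only [Finset.mem_filter, Finset.mem_singleton, hbig, Finset.mem_univ, true_and]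
    constructor
    · rintro ⟨_, h2⟩; exact Fin.ext h2
    · rintro rfl
      refine ⟨?_, rfl⟩
      rw [insPerm_apply_p]
  have step2 : (Finset.filter (fun i : Fin (N+2) => ¬((i : ℕ) = p)) big).card =
      (Finset.filter (fun j : Fin N => (j : ℕ) + 1 ≠ p) small).card := by
    symm
    refine Finset.card_bij (fun (j : Fin N) (_ : j ∈ Finset.filter
      (fun j : Fin N => (j : ℕ) + 1 ≠ p) small) => (⟨fup p (j : ℕ), fup_lt j.2⟩ : Fin (N+2)))
      ?_ ?_ ?_
    · intro j hj
      simp only [Finset.mem_filter, hsmall, hbig, Finset.mem_univ, true_and] at hj ⊢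
      obtain ⟨h1, h2⟩ := hj
      refine ⟨?_, fup_ne_p⟩
      rw [insPerm_apply_fup]
      show fup p ((ι j : ℕ)) = fup p (j : ℕ) + 1
      exact (fup_chord hp (ι j).2 j.2).2 ⟨h1, h2⟩
    · intro a _ b _ h
      exact Fin.ext (fup_inj (congrArg Fin.val h))
    · intro i hi
      simp only [Finset.mem_filter, hbig, Finset.mem_univ, true_and] at hi
      obtain ⟨hch, hnep⟩ := hi
      have hne1 : (i : ℕ) ≠ p + 1 := by
        intro h
        have : i = (⟨p + 1, by omega⟩ : Fin (N+2)) := Fin.ext h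
        rw [this, insPerm_apply_p1] at hch
        simp only [Fin.val_mk] at hch
        omega
      rcases cover hp i with rfl | rfl | ⟨x, rfl⟩
      · exact absurd rfl hnep
      · exact absurd rfl hne1
      · rw [insPerm_apply_fup] at hch
        have hch' : fup p ((ι x : ℕ)) = fup p (x : ℕ) + 1 := hch
        obtain ⟨hc1, hc2⟩ := (fup_chord hp (ι x).2 x.2).1 hch'
        refine ⟨x, ?_, rfl⟩
        simp only [Finset.mem_filter, hsmall, Finset.mem_univ, true_and]
        exact ⟨hc1, hc2⟩
  have step3 : (Finset.filter (fun j : Fin N => ¬((j : ℕ) + 1 ≠ p)) small).card =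
      (if SplitsAt ι p then 1 else 0) := by
    split
    · next hs =>
      obtain ⟨j0, hj1, hj2⟩ := hs
      rw [show (Finset.filter (fun j : Fin N => ¬((j : ℕ) + 1 ≠ p)) small) = {j0} from ?_, Finset.card_singleton]
      ext j
      simp only [Finset.mem_filter, hsmall, Finset.mem_univ, true_and, Finset.mem_singleton,
        not_not]
      constructor
      · rintro ⟨h1, h2⟩
        exact Fin.ext (by omega)
      · rintro rfl
        exact ⟨hj1, hj2⟩
    · next hs =>
      rw [Finset.card_eq_zero]
      ext j
      simp only [Finset.mem_filter, hsmall, Finset.mem_univ, true_and, Finset.notMem_empty,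
        iff_false, not_and, not_not]
      intro h1 h2
      exact hs ⟨j, h1, h2⟩
  have hb : big.card = (Finset.filter (fun i : Fin (N+2) => (i : ℕ) = p) big).card +
      (Finset.filter (fun i : Fin (N+2) => ¬((i : ℕ) = p)) big).card :=
    (Finset.card_filter_add_card_filter_not _).symm
  have hsm : small.card = (Finset.filter (fun j : Fin N => (j : ℕ) + 1 ≠ p) small).card +
      (Finset.filter (fun j : Fin N => ¬((j : ℕ) + 1 ≠ p)) small).card :=
    (Finset.card_filter_add_card_filter_not _).symm
  show big.card + _ = small.card + 1
  rw [hb, hsm, step1, step2, step3, Finset.card_singleton]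
  ring

/-- generic product-subtype counting lemma -/
lemma card_eq_mul {α β : Type*} [Fintype α] [Fintype β] (C : α → Prop) (Q : α → β → Prop)
    (k : ℕ) (hk : ∀ a, C a → Nat.card {b // Q a b} = k) :
    Nat.card {x : α × β // C x.1 ∧ Q x.1 x.2} = k * Nat.card {a // C a} := by
  classical
  rw [Nat.card_eq_fintype_card, Nat.card_eq_fintype_card]
  have e : {x : α × β // C x.1 ∧ Q x.1 x.2} ≃ Σ a : {a // C a}, {b // Q a.1 b} :=
    { toFun := fun x => ⟨⟨x.1.1, x.2.1⟩, ⟨x.1.2, x.2.2⟩⟩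
      invFun := fun s => ⟨(s.1.1, s.2.1), s.1.2, s.2.2⟩
      left_inv := fun x => rfl
      right_inv := fun ⟨⟨a, ha⟩, ⟨b, hb⟩⟩ => rfl }
  rw [Fintype.card_congr e, Fintype.card_sigma]
  have hconst : ∀ a : {a // C a}, Fintype.card {b // Q a.1 b} = k := by
    intro a
    rw [← Nat.card_eq_fintype_card]
    exact hk a.1 a.2
  rw [Finset.sum_congr rfl (fun a _ => hconst a), Finset.sum_const, smul_eq_mul, mul_comm,
    Finset.card_univ]

lemma card_chords {K : ℕ} (σ : Perm (Fin K)) :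
    Nat.card {j : Fin K // (σ j : ℕ) = (j : ℕ) + 1} = mct σ := by
  classical
  rw [Nat.card_eq_fintype_card, Fintype.card_subtype]
  rfl

lemma card_splits {N : ℕ} (ι : Perm (Fin N)) :
    (Finset.univ.filter fun pf : Fin (N + 2) => ((pf : ℕ) ≤ N ∧ SplitsAt ι (pf : ℕ))).card =
      mct ι := by
  classical
  symm
  unfold mct
  refine Finset.card_bij (fun (j : Fin N) (_ : j ∈ Finset.univ.filter
      (fun j : Fin N => ((ι j : ℕ) = (j : ℕ) + 1))) => (⟨(j : ℕ) + 1, by omega⟩ : Fin (N+2)))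
    ?_ ?_ ?_
  · intro j hj
    simp only [Finset.mem_filter, Finset.mem_univ, true_and] at hj ⊢
    have := (ι j).2
    exact ⟨by omega, ⟨j, hj, rfl⟩⟩
  · intro a _ b _ h
    have := congrArg Fin.val h
    simp only [Fin.val_mk] at this
    exact Fin.ext (by omega)
  · intro pf hpf
    simp only [Finset.mem_filter, Finset.mem_univ, true_and] at hpf
    obtain ⟨hle, j, hj1, hj2⟩ := hpf
    refine ⟨j, by simp [Finset.mem_filter, hj1], Fin.ext ?_⟩
    simp only [Fin.val_mk]
    omega

lemma card_le_positions {N : ℕ} :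
    (Finset.univ.filter fun pf : Fin (N + 2) => (pf : ℕ) ≤ N).card = N + 1 := by
  classical
  rw [show N + 1 = Fintype.card (Fin (N+1)) by simp, ← Finset.card_univ]
  symm
  refine Finset.card_bij (fun (i : Fin (N+1)) (_ : i ∈ Finset.univ) =>
    (⟨(i : ℕ), by omega⟩ : Fin (N+2))) ?_ ?_ ?_
  · intro i _
    simp only [Finset.mem_filter, Finset.mem_univ, true_and, Fin.val_mk]
    omega
  · intro a _ b _ h
    have := congrArg Fin.val h
    simp only [Fin.val_mk] at this
    exact Fin.ext this
  · intro pf hpf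
    simp only [Finset.mem_filter, Finset.mem_univ, true_and] at hpf
    exact ⟨⟨(pf : ℕ), by omega⟩, Finset.mem_univ _, Fin.ext rfl⟩

/-- `cLCD2 g n m` : the number of linear chord diagrams with `n` chords, genus `g` and
`m` 1-chords, identified with fixed-point-free involutions `ι` of `Fin (2n)` such that
the number of cycles `r` of `τₙ ∘ ι` (where `τₙ = finRotate (2n)` is the standard
`2n`-cycle) satisfies `r = n + 1 - 2g` and the number of indices `i` with `ι i = i + 1`
is `m`.  By convention `cLCD2 0 0 0 = 1` and `cLCD2 g 0 m = 0` otherwise. -/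
noncomputable def cLCD2 (g n m : ℕ) : ℕ :=
  if n = 0 then (if g = 0 ∧ m = 0 then 1 else 0)
  else Nat.card {ι : Equiv.Perm (Fin (2 * n)) //
    ι * ι = 1 ∧ (∀ i, ι i ≠ i) ∧
    numCycles (finRotate (2 * n) * ι) + 2 * g = n + 1 ∧
    (Finset.univ.filter fun i : Fin (2 * n) => ((ι i : ℕ) = (i : ℕ) + 1)).card = m}

/-- base condition: fixed-point-free involution of genus `g` -/
def condI (g R : ℕ) {K : ℕ} (ι : Perm (Fin K)) : Prop :=
  ι * ι = 1 ∧ (∀ i, ι i ≠ i) ∧ numCycles (finRotate K * ι) + 2 * g = R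

lemma cLCD2_eq (g n m : ℕ) (hn : n ≠ 0) :
    cLCD2 g n m = Nat.card {ι : Perm (Fin (2 * n)) // condI g (n + 1) ι ∧ mct ι = m} := by
  rw [cLCD2, if_neg hn]
  apply Nat.card_congr
  apply Equiv.subtypeEquivRight
  intro ι
  unfold condI mct
  tauto

lemma perm2_eq_swap (ι : Perm (Fin 2)) (h : ∀ i, ι i ≠ i) : ι = Equiv.swap 0 1 := by
  apply Equiv.ext
  intro x
  have h0 := h 0
  have h1 := h 1
  have v0 := (ι 0).2
  have v1 := (ι 1).2
  fin_cases x
  · show ι 0 = Equiv.swap 0 1 0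
    have : ι 0 = 1 := by
      have := Fin.val_ne_of_ne h0
      apply Fin.ext
      omega
    rw [this]; decide
  · show ι 1 = Equiv.swap 0 1 1
    have : ι 1 = 0 := by
      have := Fin.val_ne_of_ne h1
      apply Fin.ext
      omega
    rw [this]; decide

lemma rot2_swap : finRotate 2 * Equiv.swap 0 1 = (1 : Perm (Fin 2)) := by decide

lemma numCycles_one {K : ℕ} : numCycles (1 : Perm (Fin K)) = K := by
  unfold numCycles
  simp

lemma mct_swap2 : mct (Equiv.swap 0 1 : Perm (Fin 2)) = 1 := by decide

lemma cLCD2_one (g k : ℕ) : cLCD2 g 1 k = if g = 0 ∧ k = 1 then 1 else 0 := by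
  rw [cLCD2_eq g 1 k one_ne_zero]
  classical
  split
  · next hgk =>
    obtain ⟨rfl, rfl⟩ := hgk
    rw [Nat.card_eq_fintype_card, Fintype.card_eq_one_iff]
    refine ⟨⟨Equiv.swap 0 1, ⟨⟨?_, ?_, ?_⟩, ?_⟩⟩, ?_⟩
    · exact Equiv.swap_mul_self _ _
    · decide
    · show numCycles (finRotate 2 * Equiv.swap 0 1) + 0 = 2
      rw [rot2_swap, numCycles_one]
    · exact mct_swap2
    · rintro ⟨ι, ⟨h1, h2, h3⟩, h4⟩
      apply Subtype.ext
      exact perm2_eq_swap ι h2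
  · next hgk =>
    rw [Nat.card_eq_zero]
    left
    refine ⟨?_⟩
    rintro ⟨ι, ⟨h1, h2, h3⟩, h4⟩
    have hsw := perm2_eq_swap ι h2
    subst hsw
    rw [rot2_swap, numCycles_one] at h3
    rw [mct_swap2] at h4
    exact hgk ⟨by omega, h4.symm⟩

/-- marked diagrams with `n+1` chords: a diagram together with a marked 1-chord -/
def Atype (g n m : ℕ) : Type :=
  {x : Perm (Fin (2 * n + 2)) × Fin (2 * n + 2) //
    (condI g (n + 2) x.1 ∧ mct x.1 = m + 1) ∧ ((x.1 x.2 : ℕ) = (x.2 : ℕ) + 1)}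

/-- diagrams with `n` chords together with an insertion position -/
def Btype (g n m : ℕ) : Type :=
  {y : Perm (Fin (2 * n)) × Fin (2 * n + 2) //
    condI g (n + 1) y.1 ∧ ((y.2 : ℕ) ≤ 2 * n ∧
      ((SplitsAt y.1 (y.2 : ℕ) ∧ mct y.1 = m + 1) ∨
        (¬SplitsAt y.1 (y.2 : ℕ) ∧ mct y.1 = m)))}

lemma card_A (g n m : ℕ) :
    Nat.card (Atype g n m) =
      (m + 1) * Nat.card {ι : Perm (Fin (2 * n + 2)) // condI g (n + 2) ι ∧ mct ι = m + 1} := by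
  unfold Atype
  exact card_eq_mul (fun ι => condI g (n + 2) ι ∧ mct ι = m + 1)
    (fun ι j => ((ι j : ℕ) = (j : ℕ) + 1)) (m + 1)
    (fun ι h => (card_chords ι).trans (by rw [h.2]))

lemma ins_inj {N p : ℕ} (hp : p ≤ N) : Function.Injective (insPerm N p hp) := by
  intro ι₁ ι₂ h
  apply Equiv.ext
  intro x
  have h1 := Equiv.ext_iff.1 h ⟨fup p x, fup_lt x.2⟩
  rw [insPerm_apply_fup, insPerm_apply_fup] at h1
  exact Fin.ext (fup_inj (congrArg Fin.val h1))

lemma ins_chord {N p : ℕ} (ι : Perm (Fin N)) (hp : p ≤ N) :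
    ((insPerm N p hp ι ⟨p, by omega⟩ : Fin (N + 2)) : ℕ) = p + 1 :=
  congrArg Fin.val (insPerm_apply_p hp ι)

lemma ins_props (g n m : ℕ) (hn : 0 < n) (ι : Perm (Fin (2 * n))) (p : ℕ) (hp : p ≤ 2 * n)
    (hcond : condI g (n + 1) ι)
    (hdisj : (SplitsAt ι p ∧ mct ι = m + 1) ∨ (¬SplitsAt ι p ∧ mct ι = m)) :
    condI g (n + 2) (insPerm (2 * n) p hp ι) ∧ mct (insPerm (2 * n) p hp ι) = m + 1 := by
  obtain ⟨hinv, hfpf, hgen⟩ := hcond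
  refine ⟨⟨insPerm_sq hp ι hinv, insPerm_fpf hp ι hfpf, ?_⟩, ?_⟩
  · have h := numCycles_ins hp ι (by omega) hinv
    show numCycles (finRotate (2 * n + 2) * insPerm (2 * n) p hp ι) + 2 * g = n + 2
    omega
  · have h := mct_ins hp ι
    rcases hdisj with ⟨hs, hm⟩ | ⟨hs, hm⟩
    · rw [if_pos hs] at h; omega
    · rw [if_neg hs] at h; omega

lemma card_AB (g n m : ℕ) (hn : 0 < n) :
    Nat.card (Btype g n m) = Nat.card (Atype g n m) := by
  apply Nat.card_congr
  refine Equiv.ofBijective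
    (fun y => ⟨(insPerm (2 * n) ((y.1.2 : ℕ)) y.2.2.1 y.1.1, y.1.2),
      ins_props g n m hn y.1.1 (y.1.2 : ℕ) y.2.2.1 y.2.1 y.2.2.2,
      ins_chord y.1.1 y.2.2.1⟩) ⟨?_, ?_⟩
  · -- injective
    rintro ⟨⟨ι₁, pf₁⟩, hy₁⟩ ⟨⟨ι₂, pf₂⟩, hy₂⟩ h
    have h' := congrArg Subtype.val h
    have hpf : pf₁ = pf₂ := congrArg Prod.snd h'
    subst hpf
    have hι : ι₁ = ι₂ := ins_inj _ (congrArg Prod.fst h')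
    apply Subtype.ext
    show (ι₁, pf₁) = (ι₂, pf₁)
    rw [hι]
  · -- surjective
    rintro ⟨⟨ι', jf⟩, ⟨hcondA, hmctA⟩, hch⟩
    have hch' : ((ι' jf : Fin (2 * n + 2)) : ℕ) = (jf : ℕ) + 1 := hch
    have hmctA' : mct ι' = m + 1 := hmctA
    have hple : (jf : ℕ) ≤ 2 * n := by
      have := (ι' jf).2
      omega
    have hii' : ∀ z, ι' (ι' z) = z := by
      intro z
      have := congrArg (fun σ : Perm (Fin (2 * n + 2)) => σ z) hcondA.1
      simpa [Perm.mul_apply] using this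
    have hchF : ι' ⟨(jf : ℕ), by omega⟩ = ⟨(jf : ℕ) + 1, by omega⟩ := by
      apply Fin.ext
      rw [show (⟨(jf : ℕ), by omega⟩ : Fin (2 * n + 2)) = jf from Fin.ext rfl]
      exact hch'
    set ι := delPerm hple ι' (pres_of hple hii' hchF) with hι
    have hins : insPerm (2 * n) (jf : ℕ) hple ι = ι' := ins_del hple ι' hii' hchF
    have hfe : ∀ x : Fin (2 * n), ι' ⟨fup (jf : ℕ) x, fup_lt x.2⟩ =
        ⟨fup (jf : ℕ) (ι x), fup_lt (ι x).2⟩ := by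
      intro x
      rw [← hins]
      exact insPerm_apply_fup hple ι x
    have hii : ∀ x, ι (ι x) = x := by
      intro x
      have h1 := hfe x
      have h2 := hfe (ι x)
      have h3 := hii' ⟨fup (jf : ℕ) x, fup_lt x.2⟩
      rw [h1, h2] at h3
      exact Fin.ext (fup_inj (congrArg Fin.val h3))
    have hinv : ι * ι = 1 := by
      apply Equiv.ext
      intro x
      rw [Perm.mul_apply, hii]
      rfl
    have hfpf : ∀ i, ι i ≠ i := by
      intro i h
      have h1 := hfe i
      rw [h] at h1
      exact hcondA.2.1 _ h1
    have hgen : numCycles (finRotate (2 * n) * ι) + 2 * g = n + 1 := by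
      have h := numCycles_ins hple ι (by omega) hinv
      rw [hins] at h
      have h2 : numCycles (finRotate (2 * n + 2) * ι') + 2 * g = n + 2 := hcondA.2.2
      omega
    have hmb := mct_ins hple ι
    rw [hins, hmctA'] at hmb
    have hdisj : (SplitsAt ι (jf : ℕ) ∧ mct ι = m + 1) ∨
        (¬SplitsAt ι (jf : ℕ) ∧ mct ι = m) := by
      by_cases hs : SplitsAt ι (jf : ℕ)
      · left
        rw [if_pos hs] at hmb
        exact ⟨hs, by omega⟩
      · right
        rw [if_neg hs] at hmb
        exact ⟨hs, by omega⟩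
    refine ⟨⟨(ι, jf), ⟨hinv, hfpf, hgen⟩, hple, hdisj⟩, ?_⟩
    apply Subtype.ext
    show (insPerm (2 * n) (jf : ℕ) _ ι, jf) = (ι', jf)
    rw [Prod.mk.injEq]
    exact ⟨hins, rfl⟩

lemma fiberB (g n m : ℕ) (ι : Perm (Fin (2 * n))) :
    Fintype.card {pf : Fin (2 * n + 2) // (pf : ℕ) ≤ 2 * n ∧
        ((SplitsAt ι (pf : ℕ) ∧ mct ι = m + 1) ∨ (¬SplitsAt ι (pf : ℕ) ∧ mct ι = m))} +
      m * (if mct ι = m then 1 else 0) =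
    (m + 1) * (if mct ι = m + 1 then 1 else 0) + (2 * n + 1) * (if mct ι = m then 1 else 0) := by
  classical
  rw [Fintype.card_subtype]
  by_cases h1 : mct ι = m + 1
  · have hne : mct ι ≠ m := by omega
    rw [if_pos h1, if_neg hne]
    have hcongr : (Finset.univ.filter fun pf : Fin (2 * n + 2) => ((pf : ℕ) ≤ 2 * n ∧
        ((SplitsAt ι (pf : ℕ) ∧ mct ι = m + 1) ∨ (¬SplitsAt ι (pf : ℕ) ∧ mct ι = m)))) =
        (Finset.univ.filter fun pf : Fin (2 * n + 2) =>
          ((pf : ℕ) ≤ 2 * n ∧ SplitsAt ι (pf : ℕ))) := by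
      apply Finset.filter_congr
      intro pf _
      constructor
      · rintro ⟨ha, ⟨hs, _⟩ | ⟨_, hmm⟩⟩
        · exact ⟨ha, hs⟩
        · exact absurd hmm hne
      · rintro ⟨ha, hs⟩
        exact ⟨ha, Or.inl ⟨hs, h1⟩⟩
    rw [hcongr, card_splits ι, h1]
    ring
  · by_cases h0 : mct ι = m
    · rw [if_pos h0, if_neg h1]
      have hcongr : (Finset.univ.filter fun pf : Fin (2 * n + 2) => ((pf : ℕ) ≤ 2 * n ∧
          ((SplitsAt ι (pf : ℕ) ∧ mct ι = m + 1) ∨ (¬SplitsAt ι (pf : ℕ) ∧ mct ι = m)))) =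
          (Finset.univ.filter fun pf : Fin (2 * n + 2) =>
            ((pf : ℕ) ≤ 2 * n ∧ ¬SplitsAt ι (pf : ℕ))) := by
        apply Finset.filter_congr
        intro pf _
        constructor
        · rintro ⟨ha, ⟨_, hmm⟩ | ⟨hs, _⟩⟩
          · exact absurd hmm h1
          · exact ⟨ha, hs⟩
        · rintro ⟨ha, hs⟩
          exact ⟨ha, Or.inr ⟨hs, h0⟩⟩
      rw [hcongr]
      have hsplit : (Finset.univ.filter fun pf : Fin (2 * n + 2) =>
          ((pf : ℕ) ≤ 2 * n ∧ SplitsAt ι (pf : ℕ))).card = m := (card_splits ι).trans h0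
      have hkey := Finset.card_filter_add_card_filter_not
        (s := Finset.univ.filter fun pf : Fin (2 * n + 2) => (pf : ℕ) ≤ 2 * n)
        (p := fun pf : Fin (2 * n + 2) => SplitsAt ι (pf : ℕ))
      rw [Finset.filter_filter, Finset.filter_filter, card_le_positions] at hkey
      rw [show ((2:ℕ) * n + 1) * 1 = 2 * n + 1 by ring, mul_one, mul_zero, zero_add]
      omega
    · rw [if_neg h0, if_neg h1]
      rw [Finset.filter_false_of_mem, Finset.card_empty]
      · ring
      · rintro pf _ ⟨_, ⟨_, hmm⟩ | ⟨_, hmm⟩⟩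
        · exact h1 hmm
        · exact h0 hmm

lemma card_B (g n m : ℕ) :
    Nat.card (Btype g n m) +
        m * Nat.card {ι : Perm (Fin (2 * n)) // condI g (n + 1) ι ∧ mct ι = m} =
      (m + 1) * Nat.card {ι : Perm (Fin (2 * n)) // condI g (n + 1) ι ∧ mct ι = m + 1} +
        (2 * n + 1) * Nat.card {ι : Perm (Fin (2 * n)) // condI g (n + 1) ι ∧ mct ι = m} := by
  classical
  have e : Btype g n m ≃ Σ a : {ι : Perm (Fin (2 * n)) // condI g (n + 1) ι},
      {pf : Fin (2 * n + 2) // (pf : ℕ) ≤ 2 * n ∧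
        ((SplitsAt a.1 (pf : ℕ) ∧ mct a.1 = m + 1) ∨ (¬SplitsAt a.1 (pf : ℕ) ∧ mct a.1 = m))} :=
    { toFun := fun x => ⟨⟨x.1.1, x.2.1⟩, ⟨x.1.2, x.2.2⟩⟩
      invFun := fun s => ⟨(s.1.1, s.2.1), s.1.2, s.2.2⟩
      left_inv := fun x => rfl
      right_inv := fun ⟨⟨a, ha⟩, ⟨b, hb⟩⟩ => rfl }
  rw [Nat.card_congr e, Nat.card_eq_fintype_card, Fintype.card_sigma]
  have hc : ∀ k : ℕ, Nat.card {ι : Perm (Fin (2 * n)) // condI g (n + 1) ι ∧ mct ι = k} =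
      ∑ a : {ι : Perm (Fin (2 * n)) // condI g (n + 1) ι}, (if mct a.1 = k then 1 else 0) := by
    intro k
    rw [Nat.card_eq_fintype_card,
      Fintype.card_congr (Equiv.subtypeSubtypeEquivSubtypeInter
        (condI g (n + 1)) (fun ι => mct ι = k)).symm,
      Fintype.card_subtype, Finset.card_filter]
  rw [hc, hc]
  rw [Finset.mul_sum, Finset.mul_sum, Finset.mul_sum, ← Finset.sum_add_distrib,
    ← Finset.sum_add_distrib]
  apply Finset.sum_congr rfl
  intro a _
  exact fiberB g n m a.1

/-- The recursion `(m+1)·c_g(n+1,m+1) = (m+1)·c_g(n,m+1) + (2n+1-m)·c_g(n,m)` in `ℤ`. -/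
theorem statement13 (g n m : ℕ) :
    ((m : ℤ) + 1) * cLCD2 g (n + 1) (m + 1) =
      ((m : ℤ) + 1) * cLCD2 g n (m + 1) + (2 * (n : ℤ) + 1 - m) * cLCD2 g n m := by
  rcases Nat.eq_zero_or_pos n with rfl | hn
  · have h0 : ∀ k : ℕ, cLCD2 g 0 k = if g = 0 ∧ k = 0 then 1 else 0 := by
      intro k
      rw [cLCD2, if_pos rfl]
    rw [h0, h0, cLCD2_one]
    by_cases hg : g = 0
    · by_cases hm : m = 0
      · subst hg; subst hm
        norm_num
      · subst hg
        simp only [true_and, if_neg (by omega : ¬(m + 1 = 1)), if_neg (by omega : ¬(m + 1 = 0)),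
          if_neg hm]
        push_cast
        ring
    · simp only [if_neg (by tauto : ¬(g = 0 ∧ m + 1 = 1)), if_neg (by tauto : ¬(g = 0 ∧ m + 1 = 0)),
        if_neg (by tauto : ¬(g = 0 ∧ m = 0))]
      push_cast
      ring
  · have e1 : cLCD2 g (n + 1) (m + 1) =
        Nat.card {ι : Perm (Fin (2 * n + 2)) // condI g (n + 2) ι ∧ mct ι = m + 1} :=
      cLCD2_eq g (n + 1) (m + 1) (by omega)
    have e2 : cLCD2 g n (m + 1) =
        Nat.card {ι : Perm (Fin (2 * n)) // condI g (n + 1) ι ∧ mct ι = m + 1} :=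
      cLCD2_eq g n (m + 1) (by omega)
    have e3 : cLCD2 g n m =
        Nat.card {ι : Perm (Fin (2 * n)) // condI g (n + 1) ι ∧ mct ι = m} :=
      cLCD2_eq g n m (by omega)
    have key : (m + 1) * cLCD2 g (n + 1) (m + 1) + m * cLCD2 g n m =
        (m + 1) * cLCD2 g n (m + 1) + (2 * n + 1) * cLCD2 g n m := by
      rw [e1, e2, e3, ← card_A g n m, ← card_AB g n m hn]
      exact card_B g n m
    have keyZ := congrArg (Nat.cast : ℕ → ℤ) key
    push_cast at keyZ
    linarith
end
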